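/- arXiv:2509.14209 — 3 statements merged into one kernel-verified Lean document; each statement's English description precedes it below -/
import Mathlib

section
/- Let X be a locally compact complete separable metric space, Y a set, π : X → Y a map, and let μ_y, μ_{y'} be probability measures on X with supp(μ_y) = π^{-1}(y) and μ_{y'} concentrated on π^{-1}(y'). If W_1(μ_y, μ_{y'}) = d(π^{-1}(y), π^{-1}(y')), then d(x, π^{-1}(y')) = d(π^{-1}(y), π^{-1}(y')) for every x ∈ π^{-1}(y). In particular, if this holds for all pairs of fibers, the family {π^{-1}(y)} is a metric foliation. -/
open MeasureTheory ENNReal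

noncomputable section

/-- The set of couplings of two measures: measures on `X × X` with the given marginals. -/
def couplings {X : Type*} [MeasurableSpace X] (μ ν : Measure X) : Set (Measure (X × X)) :=
  {γ | γ.map Prod.fst = μ ∧ γ.map Prod.snd = ν}

/-- The `p`-Wasserstein distance (valued in `ℝ≥0∞`):
`W_p(μ,ν) = (inf_{γ ∈ Π(μ,ν)} ∫ d(x₁,x₂)^p dγ)^{1/p}`. -/
def wassersteinE {X : Type*} [PseudoEMetricSpace X] [MeasurableSpace X] (p : ℝ)
    (μ ν : Measure X) : ℝ≥0∞ :=
  (⨅ γ ∈ couplings μ ν, ∫⁻ z, edist z.1 z.2 ^ p ∂γ) ^ (1 / p)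

/-- Distance between two subsets: `d(A,B) = inf {d(a,b) : a ∈ A, b ∈ B}`. -/
def setEDist {X : Type*} [PseudoEMetricSpace X] (A B : Set X) : ℝ≥0∞ :=
  ⨅ a ∈ A, ⨅ b ∈ B, edist a b

/-- The support of a measure: points all of whose open neighbourhoods have positive measure. -/
def mSupport {X : Type*} [TopologicalSpace X] [MeasurableSpace X] (μ : Measure X) : Set X :=
  {x | ∀ U : Set X, IsOpen U → x ∈ U → 0 < μ U}

/-- In a second countable space, the complement of the support is null. -/
theorem measure_compl_mSupport' {X : Type*} [TopologicalSpace X]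
    [SecondCountableTopology X] [MeasurableSpace X]
    (μ : Measure X) : μ (mSupport μ)ᶜ = 0 := by
  obtain ⟨B, hBc, -, hBbasis⟩ := TopologicalSpace.exists_countable_basis X
  have hsub : (mSupport μ)ᶜ ⊆ ⋃₀ {u ∈ B | μ u = 0} := by
    intro z hz
    simp only [Set.mem_compl_iff, mSupport, Set.mem_setOf_eq, not_forall] at hz
    obtain ⟨U, hU, hzU, hμU⟩ := hz
    obtain ⟨u, huB, hzu, husub⟩ := hBbasis.exists_subset_of_mem_open hzU hU
    exact ⟨u, ⟨huB, measure_mono_null husub (le_zero_iff.mp (not_lt.mp hμU))⟩, hzu⟩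
  refine measure_mono_null hsub ?_
  refine (measure_sUnion_null_iff (hBc.mono (Set.sep_subset _ _))).mpr ?_
  exact fun u hu => hu.2

/-- Let `μ_y`, `μ_{y'}` be probability measures with `supp(μ_y) = π⁻¹(y)` and
`μ_{y'}` concentrated on `π⁻¹(y')`. If `W_1(μ_y, μ_{y'}) = d(π⁻¹(y), π⁻¹(y'))`, then
`d(x, π⁻¹(y')) = d(π⁻¹(y), π⁻¹(y'))` for every `x ∈ π⁻¹(y)`. -/
theorem dist_to_fiber_eq_of_wasserstein_eq {X Y : Type*}
    [MetricSpace X] [MeasurableSpace X] [BorelSpace X]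
    [LocallyCompactSpace X] [CompleteSpace X] [TopologicalSpace.SeparableSpace X]
    (π : X → Y) (y y' : Y) (μy μy' : Measure X)
    [IsProbabilityMeasure μy] [IsProbabilityMeasure μy']
    (hsupp : mSupport μy = π ⁻¹' {y})
    (hconc : μy' (π ⁻¹' {y'})ᶜ = 0)
    (hW : wassersteinE 1 μy μy' = setEDist (π ⁻¹' {y}) (π ⁻¹' {y'})) :
    ∀ x ∈ π ⁻¹' {y},
      EMetric.infEdist x (π ⁻¹' {y'}) = setEDist (π ⁻¹' {y}) (π ⁻¹' {y'}) := by
  intro x hx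
  set F := π ⁻¹' {y} with hF
  set F' := π ⁻¹' {y'} with hF'
  set D := setEDist F F' with hD
  set f : X → ℝ≥0∞ := fun z => EMetric.infEdist z F' with hf
  have hfcont : Continuous f := EMetric.continuous_infEdist
  have hfmeas : Measurable f := hfcont.measurable
  have hge : ∀ z ∈ F, D ≤ f z := by
    intro z hz
    have : D ≤ EMetric.infEdist z F' := by
      refine EMetric.le_infEdist.mpr ?_
      intro b hb
      exact iInf₂_le_of_le z hz (iInf₂_le b hb)
    exact this
  refine le_antisymm ?_ (hge x hx)
  rcases eq_top_or_lt_top D with hDtop | hDlt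
  · exact hDtop ▸ le_top
  have hμF : μy Fᶜ = 0 := by
    rw [← hsupp]; exact measure_compl_mSupport' μy
  -- W_1 without the powers
  have hWeq : wassersteinE 1 μy μy' = ⨅ γ ∈ couplings μy μy', ∫⁻ z, edist z.1 z.2 ∂γ := by
    simp [wassersteinE]
  -- upper bound on the integral of f
  have hint_le : ∫⁻ z, f z ∂μy ≤ D := by
    show _ ≤ D
    rw [← hW, hWeq]
    refine le_iInf₂ fun γ hγ => ?_
    obtain ⟨h1, h2⟩ := hγ
    have hmap : ∫⁻ z, f z ∂μy = ∫⁻ z, f z.1 ∂γ := by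
      rw [← h1, lintegral_map hfmeas measurable_fst]
    rw [hmap]
    refine lintegral_mono_ae ?_
    have hae : ∀ᵐ z ∂γ, z.2 ∈ F' := by
      rw [ae_iff]
      refine le_antisymm ?_ (zero_le ..)
      have hle : γ (Prod.snd ⁻¹' F'ᶜ) ≤ (γ.map Prod.snd) F'ᶜ :=
        Measure.le_map_apply measurable_snd.aemeasurable _
      rw [h2, hconc] at hle
      exact hle
    filter_upwards [hae] with z hz
    exact EMetric.infEdist_le_edist_of_mem hz
  -- lower bound on the integral of f
  have haege : ∀ᵐ z ∂μy, D ≤ f z := by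
    rw [ae_iff]
    refine measure_mono_null ?_ hμF
    intro z hz
    simp only [Set.mem_setOf_eq, not_le] at hz
    exact fun hzF => absurd (hge z hzF) (not_le.mpr hz)
  have hle_int : D ≤ ∫⁻ z, f z ∂μy := by
    calc D = ∫⁻ _, D ∂μy := by simp
      _ ≤ ∫⁻ z, f z ∂μy := lintegral_mono_ae haege
  have hint : ∫⁻ z, f z ∂μy = D := le_antisymm hint_le hle_int
  have hsub0 : ∫⁻ z, (f z - D) ∂μy = 0 := by
    rw [lintegral_sub measurable_const (by simp; exact hDlt.ne) haege, hint]
    simp; exact tsub_self _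
  have haefD : ∀ᵐ z ∂μy, f z ≤ D := by
    have h0 := (lintegral_eq_zero_iff (hfmeas.sub measurable_const)).mp hsub0
    filter_upwards [h0] with z hz
    exact tsub_eq_zero_iff_le.mp hz
  have hclosed : IsClosed {z | f z ≤ D} := isClosed_le hfcont continuous_const
  have hnull : μy {z | f z ≤ D}ᶜ = 0 := by
    rw [Set.compl_setOf]; exact ae_iff.mp haefD
  by_contra hlt
  have hxsupp : x ∈ mSupport μy := by rw [hsupp]; exact hx
  have hpos : 0 < μy {z | f z ≤ D}ᶜ :=
    hxsupp _ hclosed.isOpen_compl (by simpa using hlt)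
  rw [hnull] at hpos
  exact lt_irrefl _ hpos
end
end

section
/- Let λ ≥ 1 and for y > 0 let E_y := {(x₁,x₂) ∈ ℝ² : x₁² + λ²x₂² = y²} be the ellipse with major radius y. Then for all y, y' > 0 the Euclidean distance between the ellipses satisfies d(E_y, E_{y'}) = |y − y'|/λ, the infimum being attained at the endpoints of the minor axes, (0, y/λ) and (0, y'/λ). -/
open MeasureTheory ENNReal

noncomputable section

/-- The ellipse `E_y = {(x₁,x₂) : x₁² + λ²x₂² = y²}` in the Euclidean plane. -/
def Ell (lam y : ℝ) : Set (EuclideanSpace ℝ (Fin 2)) :=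
  {x | x 0 ^ 2 + lam ^ 2 * x 1 ^ 2 = y ^ 2}

/-- The point `(a, b)` of the Euclidean plane. -/
def pt (a b : ℝ) : EuclideanSpace ℝ (Fin 2) :=
  (WithLp.equiv 2 (Fin 2 → ℝ)).symm ![a, b]

lemma key_ineq (lam : ℝ) (hlam : 1 ≤ lam) {y y' a1 a2 b1 b2 : ℝ}
    (hy : 0 < y) (hy' : 0 < y')
    (ha : a1 ^ 2 + lam ^ 2 * a2 ^ 2 = y ^ 2) (hb : b1 ^ 2 + lam ^ 2 * b2 ^ 2 = y' ^ 2) :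
    |y - y'| ≤ lam * Real.sqrt ((a1 - b1) ^ 2 + (a2 - b2) ^ 2) := by
  have hlam0 : (0:ℝ) < lam := lt_of_lt_of_le one_pos hlam
  set d := Real.sqrt ((a1 - b1) ^ 2 + (a2 - b2) ^ 2) with hd
  have hd0 : 0 ≤ d := Real.sqrt_nonneg _
  have hd2 : d ^ 2 = (a1 - b1) ^ 2 + (a2 - b2) ^ 2 :=
    Real.sq_sqrt (by positivity)
  have h1 : (a1 * b1 + lam ^ 2 * a2 * b2) ^ 2 ≤ (y * y') ^ 2 := by
    nlinarith [mul_nonneg (sq_nonneg lam) (sq_nonneg (a1 * b2 - a2 * b1)),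
      sq_nonneg (a1 * b2 - a2 * b1)]
  have hcs : a1 * b1 + lam ^ 2 * a2 * b2 ≤ y * y' := by
    nlinarith [mul_pos hy hy']
  have hl2 : 1 ≤ lam ^ 2 := by nlinarith
  have h2 : (y - y') ^ 2 ≤ (lam * d) ^ 2 := by
    nlinarith [hd2, hcs, mul_nonneg (sub_nonneg.mpr hl2) (sq_nonneg (a1 - b1))]
  have := Real.sqrt_le_sqrt h2
  rwa [Real.sqrt_sq_eq_abs, Real.sqrt_sq (by positivity)] at this

lemma dist_eq' (x y : EuclideanSpace ℝ (Fin 2)) :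
    dist x y = Real.sqrt ((x 0 - y 0) ^ 2 + (x 1 - y 1) ^ 2) := by
  simp [EuclideanSpace.dist_eq, Fin.sum_univ_two, Real.dist_eq, sq_abs]

/-- For `λ ≥ 1` and `y, y' > 0`, the Euclidean distance between the ellipses
`E_y` and `E_{y'}` is `|y − y'|/λ`, attained at the endpoints of the minor axes,
`(0, y/λ)` and `(0, y'/λ)`. -/
theorem setEDist_ellipses (lam : ℝ) (hlam : 1 ≤ lam) (y y' : ℝ) (hy : 0 < y) (hy' : 0 < y') :
    setEDist (Ell lam y) (Ell lam y') = ENNReal.ofReal (|y - y'| / lam) ∧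
    pt 0 (y / lam) ∈ Ell lam y ∧ pt 0 (y' / lam) ∈ Ell lam y' ∧
    edist (pt 0 (y / lam)) (pt 0 (y' / lam)) = ENNReal.ofReal (|y - y'| / lam) := by
  have hlam0 : (0:ℝ) < lam := lt_of_lt_of_le one_pos hlam
  have hmem : ∀ z : ℝ, pt 0 (z / lam) ∈ Ell lam z := by
    intro z
    show (pt 0 (z / lam)) 0 ^ 2 + lam ^ 2 * (pt 0 (z / lam)) 1 ^ 2 = z ^ 2
    have h0 : (pt 0 (z / lam)) 0 = 0 := rfl
    have h1 : (pt 0 (z / lam)) 1 = z / lam := rfl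
    rw [h0, h1]
    field_simp
    norm_num
  have hedist : edist (pt 0 (y / lam)) (pt 0 (y' / lam)) = ENNReal.ofReal (|y - y'| / lam) := by
    rw [edist_dist, dist_eq']
    have h0 : (pt 0 (y / lam)) 0 = 0 := rfl
    have h1 : (pt 0 (y / lam)) 1 = y / lam := rfl
    have h0' : (pt 0 (y' / lam)) 0 = 0 := rfl
    have h1' : (pt 0 (y' / lam)) 1 = y' / lam := rfl
    rw [h0, h1, h0', h1']
    congr 1
    rw [show (0:ℝ) - 0 = 0 by ring, show y / lam - y' / lam = (y - y') / lam by ring]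
    rw [zero_pow (by norm_num), zero_add, Real.sqrt_sq_eq_abs, abs_div, abs_of_pos hlam0]
  refine ⟨?_, hmem y, hmem y', hedist⟩
  apply le_antisymm
  · calc setEDist (Ell lam y) (Ell lam y')
        ≤ ⨅ b ∈ Ell lam y', edist (pt 0 (y / lam)) b := iInf₂_le _ (hmem y)
      _ ≤ edist (pt 0 (y / lam)) (pt 0 (y' / lam)) := iInf₂_le _ (hmem y')
      _ = ENNReal.ofReal (|y - y'| / lam) := hedist
  · rw [setEDist]
    simp only [le_iInf_iff]
    intro a ha b hb
    rw [edist_dist]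
    apply ENNReal.ofReal_le_ofReal
    rw [dist_eq', div_le_iff₀ hlam0, mul_comm]
    exact key_ineq lam hlam hy hy' ha hb
end
end

section
/- Let λ > 1, and for y > 0 let E_y := {(x₁,x₂) ∈ ℝ² : x₁² + λ²x₂² = y²} and μ_y := δ_{(0, y/λ)}, the Dirac measure at the top of the minor axis of E_y. Then for all y, y' > 0 and all p ∈ [1,∞), W_p(μ_y, μ_{y'}) = |y − y'|/λ = d(E_y, E_{y'}). Thus the disintegration map y ↦ μ_y is an isometry onto its image with respect to the fiber distance, even though {E_y} is not a metric foliation; this shows the full-support hypothesis in the classification theorem cannot be dropped. -/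
open MeasureTheory ENNReal

noncomputable section

/-- A family of closed sets (leaves) is a metric foliation if
`d(F,F') = d(x,F')` for all leaves `F, F'` and all `x ∈ F`. -/
def IsMetricFoliationFam {X ι : Type*} [PseudoEMetricSpace X] (F : ι → Set X) : Prop :=
  (∀ i, IsClosed (F i)) ∧
  ∀ i j, ∀ x ∈ F i, EMetric.infEdist x (F j) = setEDist (F i) (F j)


section Aux

lemma dist_sq_fin2 (x y : EuclideanSpace ℝ (Fin 2)) :
    dist x y ^ 2 = (x 0 - y 0) ^ 2 + (x 1 - y 1) ^ 2 := by
  rw [EuclideanSpace.dist_eq, Real.sq_sqrt (by positivity)]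
  simp [Fin.sum_univ_two, Real.dist_eq, sq_abs]

lemma edist_pts (lam : ℝ) (hlam : 0 < lam) (u v : ℝ) :
    edist (pt 0 (u / lam)) (pt 0 (v / lam)) = ENNReal.ofReal (|u - v| / lam) := by
  rw [edist_dist]
  congr 1
  rw [EuclideanSpace.dist_eq]
  simp only [Fin.sum_univ_two, Real.dist_eq, pt]
  have h1 : ((WithLp.equiv 2 (Fin 2 → ℝ)).symm ![(0:ℝ), u / lam]) 0 = 0 := rfl
  have h2 : ((WithLp.equiv 2 (Fin 2 → ℝ)).symm ![(0:ℝ), u / lam]) 1 = u / lam := rfl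
  have h3 : ((WithLp.equiv 2 (Fin 2 → ℝ)).symm ![(0:ℝ), v / lam]) 0 = 0 := rfl
  have h4 : ((WithLp.equiv 2 (Fin 2 → ℝ)).symm ![(0:ℝ), v / lam]) 1 = v / lam := rfl
  rw [h1, h2, h3, h4]
  rw [div_sub_div_same, abs_div, abs_of_pos hlam]
  simp [sq_abs, Real.sqrt_sq_eq_abs, abs_div, abs_of_pos hlam]

lemma pt_mem_Ell (lam y : ℝ) (hlam : lam ≠ 0) : pt 0 (y / lam) ∈ Ell lam y := by
  show (pt 0 (y / lam)) 0 ^ 2 + lam ^ 2 * (pt 0 (y / lam)) 1 ^ 2 = y ^ 2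
  have h1 : (pt 0 (y / lam)) 0 = 0 := rfl
  have h2 : (pt 0 (y / lam)) 1 = y / lam := rfl
  rw [h1, h2]
  field_simp
  ring

lemma dist_Ell_lb (lam : ℝ) (hlam : 1 < lam) (y y' : ℝ) (hy : 0 < y) (hy' : 0 < y')
    {a b : EuclideanSpace ℝ (Fin 2)} (ha : a ∈ Ell lam y) (hb : b ∈ Ell lam y') :
    |y - y'| / lam ≤ dist a b := by
  have ha' : a 0 ^ 2 + lam ^ 2 * a 1 ^ 2 = y ^ 2 := ha
  have hb' : b 0 ^ 2 + lam ^ 2 * b 1 ^ 2 = y' ^ 2 := hb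
  have hd := dist_sq_fin2 a b
  have key : (y - y') ^ 2 ≤ lam ^ 2 * ((a 0 - b 0) ^ 2 + (a 1 - b 1) ^ 2) := by
    have cs : (a 0 * b 0 + lam ^ 2 * (a 1 * b 1)) ^ 2 ≤ (y * y') ^ 2 := by
      nlinarith [sq_nonneg (a 0 * lam * b 1 - lam * a 1 * b 0)]
    have h1 : a 0 * b 0 + lam ^ 2 * (a 1 * b 1) ≤ y * y' := by
      nlinarith [mul_pos hy hy']
    nlinarith [h1, mul_nonneg (show (0:ℝ) ≤ lam ^ 2 - 1 by nlinarith)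
      (sq_nonneg (a 0 - b 0))]
  have hlam0 : (0:ℝ) < lam := by linarith
  rw [div_le_iff₀ hlam0]
  have h2 : |y - y'| ^ 2 ≤ (dist a b * lam) ^ 2 := by
    rw [sq_abs]; nlinarith [key, hd]
  exact (pow_le_pow_iff_left₀ (abs_nonneg _)
    (mul_nonneg dist_nonneg hlam0.le) two_ne_zero).mp h2

lemma setEDist_Ell (lam : ℝ) (hlam : 1 < lam) (y y' : ℝ) (hy : 0 < y) (hy' : 0 < y') :
    setEDist (Ell lam y) (Ell lam y') = ENNReal.ofReal (|y - y'| / lam) := by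
  have hlam0 : (0:ℝ) < lam := by linarith
  apply le_antisymm
  · refine iInf₂_le_of_le (pt 0 (y / lam)) (pt_mem_Ell lam y hlam0.ne') ?_
    refine iInf₂_le_of_le (pt 0 (y' / lam)) (pt_mem_Ell lam y' hlam0.ne') ?_
    rw [edist_pts lam hlam0]
  · refine le_iInf₂ fun a ha => le_iInf₂ fun b hb => ?_
    rw [edist_dist]
    exact ENNReal.ofReal_le_ofReal (dist_Ell_lb lam hlam y y' hy hy' ha hb)

lemma wass_dirac {X : Type*} [EMetricSpace X] [MeasurableSpace X] [BorelSpace X]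
    (a b : X) (p : ℝ) (hp : 1 ≤ p) :
    wassersteinE p (Measure.dirac a) (Measure.dirac b) = edist a b := by
  have hp0 : p ≠ 0 := by positivity
  have hinf : (⨅ γ ∈ couplings (Measure.dirac a) (Measure.dirac b),
      ∫⁻ z : X × X, edist z.1 z.2 ^ p ∂γ) = edist a b ^ p := by
    apply le_antisymm
    · refine iInf₂_le_of_le (Measure.dirac (a, b))
        ⟨Measure.map_dirac' measurable_fst _, Measure.map_dirac' measurable_snd _⟩ ?_
      rw [lintegral_dirac]
    · refine le_iInf₂ fun γ hγ => ?_
      obtain ⟨h1, h2⟩ := hγ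
      have ha : γ {z : X × X | ¬ z.1 = a} = 0 := by
        have h := congrArg (fun m : Measure X => m {a}ᶜ) h1
        simp only [Measure.map_apply measurable_fst (measurableSet_singleton a).compl] at h
        simp at h; exact h
      have hb : γ {z : X × X | ¬ z.2 = b} = 0 := by
        have h := congrArg (fun m : Measure X => m {b}ᶜ) h2
        simp only [Measure.map_apply measurable_snd (measurableSet_singleton b).compl] at h
        simp at h; exact h
      have h3 : ∀ᵐ z : X × X ∂γ, z.1 = a := by rw [ae_iff]; exact ha
      have h4 : ∀ᵐ z : X × X ∂γ, z.2 = b := by rw [ae_iff]; exact hb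
      have hae : ∀ᵐ z : X × X ∂γ, edist z.1 z.2 ^ p = edist a b ^ p := by
        filter_upwards [h3, h4] with z e1 e2
        rw [e1, e2]
      have huniv : γ Set.univ = 1 := by
        have h := congrArg (fun m : Measure X => m Set.univ) h1
        simp only [Measure.map_apply measurable_fst MeasurableSet.univ,
          Set.preimage_univ] at h
        simpa using h
      rw [lintegral_congr_ae hae, lintegral_const, huniv, mul_one]
  rw [wassersteinE, hinf, ← ENNReal.rpow_mul, mul_one_div, div_self hp0,
    ENNReal.rpow_one]

end Aux

/-- For `λ > 1`, `y, y' > 0` and `p ∈ [1,∞)`, the Dirac measures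
`μ_y = δ_{(0, y/λ)}` at the tops of the minor axes satisfy
`W_p(μ_y, μ_{y'}) = |y − y'|/λ = d(E_y, E_{y'})`. Thus the disintegration map `y ↦ μ_y` is an
isometry with respect to the fiber distance, even though `{E_y}` is not a metric foliation;
so the full-support hypothesis in the classification theorem cannot be dropped. -/
theorem dirac_ellipse_isometry (lam : ℝ) (hlam : 1 < lam)
    (y y' : ℝ) (hy : 0 < y) (hy' : 0 < y') (p : ℝ) (hp : 1 ≤ p) :
    wassersteinE p (Measure.dirac (pt 0 (y / lam))) (Measure.dirac (pt 0 (y' / lam)))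
      = ENNReal.ofReal (|y - y'| / lam) ∧
    setEDist (Ell lam y) (Ell lam y') = ENNReal.ofReal (|y - y'| / lam) ∧
    ¬ IsMetricFoliationFam (fun z : {r : ℝ // 0 < r} => Ell lam z.1) := by
  have hlam0 : (0:ℝ) < lam := by linarith
  refine ⟨?_, setEDist_Ell lam hlam y y' hy hy', ?_⟩
  · rw [wass_dirac _ _ p hp, edist_pts lam hlam0]
  · rintro ⟨-, hfol⟩
    have hmem2 : pt 2 0 ∈ Ell lam (2:ℝ) := by
      show (pt 2 0) 0 ^ 2 + lam ^ 2 * (pt 2 0) 1 ^ 2 = (2:ℝ) ^ 2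
      have h1 : (pt 2 0) 0 = 2 := rfl
      have h2 : (pt 2 0) 1 = 0 := rfl
      rw [h1, h2]; ring
    have h := hfol ⟨2, two_pos⟩ ⟨1, one_pos⟩ (pt 2 0) hmem2
    simp only at h
    rw [setEDist_Ell lam hlam 2 1 two_pos one_pos] at h
    have hge : ENNReal.ofReal 1 ≤ EMetric.infEdist (pt 2 0) (Ell lam 1) := by
      refine EMetric.le_infEdist.2 ?_
      intro b hb
      rw [edist_dist]
      apply ENNReal.ofReal_le_ofReal
      have hb' : b 0 ^ 2 + lam ^ 2 * b 1 ^ 2 = (1:ℝ) ^ 2 := hb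
      have hd := dist_sq_fin2 (pt 2 0) b
      have h1 : (pt 2 0) 0 = 2 := rfl
      have h2 : (pt 2 0) 1 = 0 := rfl
      rw [h1, h2] at hd
      have key : (1:ℝ) ≤ (2 - b 0) ^ 2 + (0 - b 1) ^ 2 := by
        nlinarith [sq_nonneg (b 1), sq_nonneg (b 0 - 1), sq_nonneg (b 0 + 1),
          mul_nonneg (mul_nonneg (le_of_lt (show (0:ℝ) < lam ^ 2 - 1 by nlinarith))
            (show (0:ℝ) ≤ 1 - b 0 by nlinarith [sq_nonneg (b 1), sq_nonneg lam]))
            (show (0:ℝ) ≤ 1 + b 0 by nlinarith [sq_nonneg (b 1)])]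
      nlinarith [dist_nonneg (x := pt 2 0) (y := b)]
    rw [h] at hge
    have hlt : |(2:ℝ) - 1| / lam < 1 := by
      rw [show |(2:ℝ) - 1| = 1 by norm_num]
      rw [div_lt_one hlam0]
      exact hlam
    have := (ENNReal.ofReal_le_ofReal_iff (by positivity)).mp hge
    linarith
end
end
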